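/- Let (C•, d) be a cochain complex of vector spaces with an exhaustive decreasing filtration Fil^p C• preserved by d, such that the complex splits as a direct sum of finite-dimensional graded subcomplexes on each of which the filtration is finite. If the associated graded complex (gr C•, gr d) has cohomology concentrated in degree 0, then H^n(C•, d) = 0 for n ≠ 0, and the natural map gr H^0(C•, d) → H^0(gr C•, gr d) is an isomorphism. -/

import Mathlib

/-- Let `(C•, d)` be a cochain complex of complex vector spaces with an
exhaustive decreasing filtration `Fil^p C•` preserved by `d`, such that the complex splits
as a direct sum of finite-dimensional graded subcomplexes `S i` on each of which the
filtration is finite (and the filtration is compatible with the splitting).  If the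
associated graded complex has cohomology concentrated in degree `0`, then
`H^n(C•, d) = 0` for `n ≠ 0`, and the natural map `gr H⁰(C•, d) → H⁰(gr C•, gr d)` is an
isomorphism (expressed elementwise, avoiding quotient constructions; degree `0` is
written as `n + 1` with `n + 1 = 0`). -/
theorem statement4
    (C : ℤ → Type*) [∀ n, AddCommGroup (C n)] [∀ n, Module ℂ (C n)]
    (d : ∀ n : ℤ, C n →ₗ[ℂ] C (n + 1))
    (hdd : ∀ (n : ℤ) (x : C n), d (n + 1) (d n x) = 0)
    (Fil : ℤ → ∀ n : ℤ, Submodule ℂ (C n))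
    (hmono : ∀ p q : ℤ, ∀ n : ℤ, p ≤ q → Fil q n ≤ Fil p n)
    (hexh : ∀ (n : ℤ) (x : C n), ∃ p : ℤ, x ∈ Fil p n)
    (hd_fil : ∀ (p n : ℤ), ∀ x ∈ Fil p n, d n x ∈ Fil p (n + 1))
    -- the splitting into finite-dimensional graded subcomplexes
    (ι : Type*) [DecidableEq ι] (S : ι → ∀ n : ℤ, Submodule ℂ (C n))
    (hinternal : ∀ n : ℤ, DirectSum.IsInternal fun i : ι => S i n)
    (hS_d : ∀ (i : ι) (n : ℤ), ∀ x ∈ S i n, d n x ∈ S i (n + 1))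
    (hS_fd : ∀ (i : ι) (n : ℤ), FiniteDimensional ℂ (S i n))
    (hS_bdd : ∀ i : ι, {n : ℤ | S i n ≠ ⊥}.Finite)
    (hFil_S : ∀ (p n : ℤ), Fil p n = ⨆ i : ι, (Fil p n ⊓ S i n))
    (hFil_fin : ∀ i : ι, ∃ p₀ p₁ : ℤ,
      (∀ n : ℤ, S i n ≤ Fil p₀ n) ∧ (∀ n : ℤ, Fil p₁ n ⊓ S i n = ⊥))
    -- the cohomology of the associated graded complex is concentrated in degree 0
    (hgr_vanish : ∀ n : ℤ, n + 1 ≠ 0 → ∀ p : ℤ, ∀ x ∈ Fil p (n + 1),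
      d (n + 1) x ∈ Fil (p + 1) (n + 1 + 1) →
      ∃ y ∈ Fil p n, x - d n y ∈ Fil (p + 1) (n + 1)) :
    -- vanishing of `H^m(C)` for `m ≠ 0`
    (∀ n : ℤ, n + 1 ≠ 0 → ∀ x : C (n + 1), d (n + 1) x = 0 → ∃ y : C n, d n y = x) ∧
    -- surjectivity of `gr H⁰ → H⁰(gr)`
    (∀ n : ℤ, n + 1 = 0 → ∀ p : ℤ, ∀ x ∈ Fil p (n + 1),
      d (n + 1) x ∈ Fil (p + 1) (n + 1 + 1) →
      ∃ x' ∈ Fil p (n + 1), d (n + 1) x' = 0 ∧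
        ∃ y ∈ Fil p n, x - x' - d n y ∈ Fil (p + 1) (n + 1)) ∧
    -- injectivity of `gr H⁰ → H⁰(gr)`
    (∀ n : ℤ, n + 1 = 0 → ∀ p : ℤ, ∀ x ∈ Fil p (n + 1), d (n + 1) x = 0 →
      (∃ y ∈ Fil p n, x - d n y ∈ Fil (p + 1) (n + 1)) →
      ∃ z ∈ Fil (p + 1) (n + 1), d (n + 1) z = 0 ∧ ∃ w : C n, x = z + d n w) := by
  classical
  -- inverse of the internal direct-sum decomposition
  let e : ∀ n : ℤ, DirectSum ι (fun i => S i n) ≃ₗ[ℂ] C n := fun n =>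
    LinearEquiv.ofBijective (DirectSum.coeLinearMap fun i => S i n) (hinternal n)
  -- the projection onto the `i`-th summand
  let π : ι → ∀ n : ℤ, C n →ₗ[ℂ] C n := fun i n =>
    (S i n).subtype ∘ₗ (DirectSum.component ℂ ι (fun i => S i n) i) ∘ₗ
      ((e n).symm : C n →ₗ[ℂ] DirectSum ι fun i => S i n)
  have hπ_mem : ∀ (i : ι) (n : ℤ) (x : C n), π i n x ∈ S i n := fun i n x =>
    ((((e n).symm x) i) : S i n).2
  have hπ_of : ∀ (i j : ι) (n : ℤ) (z : C n) (hz : z ∈ S j n),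
      π i n z = if h : i = j then z else 0 := by
    intro i j n z hz
    have he : (e n).symm z = DirectSum.of (fun i => S i n) j ⟨z, hz⟩ := by
      apply (e n).symm_apply_eq.mpr
      symm
      show DirectSum.coeLinearMap (fun i => S i n) _ = z
      rw [DirectSum.coeLinearMap_of]
    show ((((e n).symm z) i : S i n) : C n) = _
    rw [he]
    by_cases h : i = j
    · subst h
      rw [DirectSum.of_eq_same]
      simp
    · rw [DirectSum.of_eq_of_ne _ _ _ h]
      simp [h]
  have hπ_self : ∀ (i : ι) (n : ℤ) (z : C n), z ∈ S i n → π i n z = z := by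
    intro i n z hz; rw [hπ_of i i n z hz]; simp
  have hπ_ne : ∀ (i j : ι) (n : ℤ) (z : C n), z ∈ S j n → i ≠ j → π i n z = 0 := by
    intro i j n z hz h; rw [hπ_of i j n z hz]; simp [h]
  -- every element is a finite sum of its projections
  have hsum : ∀ (n : ℤ) (x : C n), ∃ t : Finset ι, x = ∑ i ∈ t, π i n x := by
    intro n x
    refine ⟨DFinsupp.support ((e n).symm x), ?_⟩
    conv_lhs => rw [← (e n).apply_symm_apply x,
      ← DirectSum.sum_support_of ((e n).symm x)]
    rw [map_sum]
    refine Finset.sum_congr rfl fun i _ => ?_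
    show DirectSum.coeLinearMap (fun i => S i n) _ = _
    rw [DirectSum.coeLinearMap_of]
    rfl
  -- projections preserve the filtration
  have hπ_fil : ∀ (i : ι) (p n : ℤ) (x : C n), x ∈ Fil p n → π i n x ∈ Fil p n := by
    intro i p n x hx
    rw [hFil_S p n] at hx
    refine Submodule.iSup_induction (motive := fun z => π i n z ∈ Fil p n)
      (fun j => Fil p n ⊓ S j n) hx ?_ ?_ ?_
    · intro j z hz
      rcases eq_or_ne i j with h | h
      · subst h; rw [hπ_self i n z hz.2]; exact hz.1
      · rw [hπ_ne i j n z hz.2 h]; exact Submodule.zero_mem _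
    · simp
    · intro a b ha hb
      rw [map_add]; exact Submodule.add_mem _ ha hb
  -- projections commute with the differential
  have hπ_d : ∀ (i : ι) (n : ℤ) (x : C n), π i (n + 1) (d n x) = d n (π i n x) := by
    intro i n x
    have hx : x ∈ ⨆ j, S j n := by
      rw [(hinternal n).submodule_iSup_eq_top]; trivial
    refine Submodule.iSup_induction
      (motive := fun z => π i (n + 1) (d n z) = d n (π i n z))
      (fun j => S j n) hx ?_ ?_ ?_
    · intro j z hz
      rcases eq_or_ne i j with h | h
      · subst h
        rw [hπ_self i n z hz, hπ_self i (n + 1) (d n z) (hS_d i n z hz)]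
      · rw [hπ_ne i j n z hz h, hπ_ne i j (n + 1) (d n z) (hS_d j n z hz) h, map_zero]
    · simp
    · intro a b ha hb
      rw [map_add, map_add, ha, hb, map_add (π i n), map_add]
  -- the key lemma on each summand, by induction on the (finite) filtration length
  have key : ∀ (i : ι) (n : ℤ), n + 1 ≠ 0 → ∀ (p : ℤ) (x : C (n + 1)),
      x ∈ Fil p (n + 1) → x ∈ S i (n + 1) → d (n + 1) x = 0 →
      ∃ y, y ∈ Fil p n ∧ y ∈ S i n ∧ d n y = x := by
    intro i
    obtain ⟨p₀, p₁, hp₀, hp₁⟩ := hFil_fin i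
    have main : ∀ k : ℕ, ∀ n : ℤ, n + 1 ≠ 0 → ∀ p : ℤ, p₁ ≤ p + k →
        ∀ x : C (n + 1), x ∈ Fil p (n + 1) → x ∈ S i (n + 1) → d (n + 1) x = 0 →
        ∃ y, y ∈ Fil p n ∧ y ∈ S i n ∧ d n y = x := by
      intro k
      induction k with
      | zero =>
        intro n hn p hp x hxF hxS hdx
        have hx0 : x ∈ Fil p₁ (n + 1) ⊓ S i (n + 1) :=
          ⟨hmono p₁ p (n + 1) (by omega) hxF, hxS⟩
        rw [hp₁ (n + 1), Submodule.mem_bot] at hx0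
        exact ⟨0, Submodule.zero_mem _, Submodule.zero_mem _, by rw [map_zero, hx0]⟩
      | succ k ih =>
        intro n hn p hp x hxF hxS hdx
        obtain ⟨y, hyF, hres⟩ := hgr_vanish n hn p x hxF
          (by rw [hdx]; exact Submodule.zero_mem _)
        set yi := π i n y with hyi_def
        have hyiF : yi ∈ Fil p n := hπ_fil i p n y hyF
        have hyiS : yi ∈ S i n := hπ_mem i n y
        have hproj : π i (n + 1) (x - d n y) = x - d n yi := by
          rw [map_sub, hπ_d i n y, hπ_self i (n + 1) x hxS]
        have hx'F : x - d n yi ∈ Fil (p + 1) (n + 1) := by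
          rw [← hproj]; exact hπ_fil i (p + 1) (n + 1) _ hres
        have hx'S : x - d n yi ∈ S i (n + 1) :=
          Submodule.sub_mem _ hxS (hS_d i n yi hyiS)
        have hdx' : d (n + 1) (x - d n yi) = 0 := by
          rw [map_sub, hdx, hdd n yi, sub_zero]
        obtain ⟨y', hy'F, hy'S, hdy'⟩ := ih n hn (p + 1) (by omega) _ hx'F hx'S hdx'
        refine ⟨yi + y', Submodule.add_mem _ hyiF (hmono p (p + 1) n (by omega) hy'F),
          Submodule.add_mem _ hyiS hy'S, ?_⟩
        rw [map_add, hdy']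
        abel
    intro n hn p x hxF hxS hdx
    exact main (p₁ - p).toNat n hn p (by omega) x hxF hxS hdx
  -- the global lemma: filtered exactness in nonzero degrees
  have glob : ∀ n : ℤ, n + 1 ≠ 0 → ∀ p : ℤ, ∀ x ∈ Fil p (n + 1),
      d (n + 1) x = 0 → ∃ y ∈ Fil p n, d n y = x := by
    intro n hn p x hxF hdx
    obtain ⟨t, hts⟩ := hsum (n + 1) x
    have hx_i : ∀ i : ι, ∃ y, y ∈ Fil p n ∧ d n y = π i (n + 1) x := by
      intro i
      obtain ⟨y, hy1, _, hy3⟩ := key i n hn p (π i (n + 1) x)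
        (hπ_fil i p (n + 1) x hxF) (hπ_mem i (n + 1) x)
        (by rw [← hπ_d i (n + 1) x, hdx, map_zero])
      exact ⟨y, hy1, hy3⟩
    choose y hy1 hy2 using hx_i
    refine ⟨∑ i ∈ t, y i, Submodule.sum_mem _ fun i _ => hy1 i, ?_⟩
    rw [map_sum]
    conv_rhs => rw [hts]
    exact Finset.sum_congr rfl fun i _ => hy2 i
  refine ⟨?_, ?_, ?_⟩
  · -- vanishing
    intro n hn x hdx
    obtain ⟨p, hp⟩ := hexh (n + 1) x
    obtain ⟨y, _, hdy⟩ := glob n hn p x hp hdx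
    exact ⟨y, hdy⟩
  · -- surjectivity
    intro n hn p x hxF hdxF
    obtain ⟨y, hyF, hdy⟩ := glob (n + 1) (by omega) (p + 1) (d (n + 1) x) hdxF
      (hdd (n + 1) x)
    refine ⟨x - y, Submodule.sub_mem _ hxF (hmono p (p + 1) (n + 1) (by omega) hyF),
      by rw [map_sub, hdy, sub_self], 0, Submodule.zero_mem _, ?_⟩
    have : x - (x - y) - d n 0 = y := by rw [map_zero]; abel
    rw [this]
    exact hyF
  · -- injectivity
    rintro n hn p x hxF hdx ⟨y, hyF, hres⟩
    refine ⟨x - d n y, hres, by rw [map_sub, hdx, hdd n y, sub_zero], y, by abel⟩
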